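/- Let V be a real vector space with a symmetric bilinear form Q, and let β, α ∈ V satisfy Q(β,β) = 0 and Q(β,α) > 0, with Q(α,α) > 0. Suppose Q is negative semidefinite on the hyperplane P = {γ : Q(α,γ) = 0}. Then every γ ∈ V with Q(β,γ) = 0 satisfies Q(γ,γ) ≤ 0. -/

import Mathlib

/-- Degenerate case of the Hodge index theorem. -/
theorem stmt2 {V : Type*} [AddCommGroup V] [Module ℝ V]
    (Q : V →ₗ[ℝ] V →ₗ[ℝ] ℝ) (hQ : ∀ x y, Q x y = Q y x)
    (β α : V) (hββ : Q β β = 0) (hβα : 0 < Q β α) (hαα : 0 < Q α α)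
    (hneg : ∀ δ : V, Q α δ = 0 → Q δ δ ≤ 0) :
    ∀ γ : V, Q β γ = 0 → Q γ γ ≤ 0 := by
  intro γ hβγ
  set t := Q α γ / Q β α with ht
  have hδ : Q α (γ - t • β) = 0 := by
    have : Q α β = Q β α := hQ α β
    simp only [map_sub, map_smul, smul_eq_mul, ht, this]
    field_simp
    ring
  have h := hneg _ hδ
  have hγβ : Q γ β = 0 := (hQ γ β).trans hβγ
  simpa [map_sub, map_smul, smul_eq_mul, hγβ, hβγ, hββ] using h
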